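/- Let U ≤ M_n(ℂ) be a subspace that is upper right block closed, and suppose dim U = d with δ := d − 3n²/4 − n/2 + 1/4 > 0. Then for every integer k with |k − (n+1)/2| < √δ, there exist indices i ≠ j with i > k > j such that B_{ij} ≤ U. -/

import Mathlib

/-- The upper right block subspace `B i j ≤ M_n(ℂ)`: the span of the elementary matrices
`E k ℓ` with `k ≤ i` and `ℓ ≥ j`. -/
noncomputable def upperRightBlock (n : ℕ) (i j : Fin n) : Submodule ℂ (Matrix (Fin n) (Fin n) ℂ) :=
  Submodule.span ℂ
    {m : Matrix (Fin n) (Fin n) ℂ | ∃ k ℓ : Fin n, k ≤ i ∧ j ≤ ℓ ∧ m = Matrix.single k ℓ 1}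

/-- `U` is upper right block closed if whenever `u ∈ U` has `u i j ≠ 0` with `i ≠ j`,
then `B i j ≤ U`. -/
def UpperRightBlockClosed {n : ℕ} (U : Submodule ℂ (Matrix (Fin n) (Fin n) ℂ)) : Prop :=
  ∀ u ∈ U, ∀ i j : Fin n, i ≠ j → u i j ≠ 0 → upperRightBlock n i j ≤ U

set_option maxHeartbeats 1000000 in
/-- Indices are written `1`-based via `(i : ℕ) + 1` for `i : Fin n`. -/
theorem stmt_5 (n d : ℕ) (U : Submodule ℂ (Matrix (Fin n) (Fin n) ℂ))
    (hclosed : UpperRightBlockClosed U) (hdim : Module.finrank ℂ U = d)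
    (hδ : (0 : ℝ) < (d : ℝ) - 3 * n ^ 2 / 4 - n / 2 + 1 / 4) :
    ∀ k : ℕ, |(k : ℝ) - (n + 1) / 2| <
        Real.sqrt ((d : ℝ) - 3 * n ^ 2 / 4 - n / 2 + 1 / 4) →
      ∃ i j : Fin n, i ≠ j ∧ (i : ℕ) + 1 > k ∧ k > (j : ℕ) + 1 ∧
        upperRightBlock n i j ≤ U := by
  intro k hk
  by_contra hcon
  push_neg at hcon
  -- entries in the lower-left block vanish on U
  have hzero : ∀ u ∈ U, ∀ i j : Fin n, k ≤ (i : ℕ) → (j : ℕ) + 1 < k → u i j = 0 := by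
    intro u hu i j hi hj
    by_contra hne
    have hij : i ≠ j := Fin.ne_of_val_ne (by omega)
    exact hcon i j hij (by omega) hj (hclosed u hu i j hij hne)
  -- the evaluation map on block entries
  set S := {p : Fin n × Fin n // k ≤ (p.1 : ℕ) ∧ (p.2 : ℕ) + 1 < k} with hS
  let φ : Matrix (Fin n) (Fin n) ℂ →ₗ[ℂ] (S → ℂ) :=
    { toFun := fun m p => m p.1.1 p.1.2
      map_add' := fun _ _ => rfl
      map_smul' := fun _ _ => rfl }
  have hsurj : Function.Surjective φ := by
    intro f
    refine ⟨Matrix.of fun i j =>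
      if h : k ≤ (i : ℕ) ∧ (j : ℕ) + 1 < k then f ⟨(i, j), h⟩ else 0, ?_⟩
    funext p
    obtain ⟨⟨i, j⟩, hp⟩ := p
    simp only [φ, LinearMap.coe_mk, AddHom.coe_mk, Matrix.of_apply]
    exact dif_pos hp
  have hker : U ≤ LinearMap.ker φ := by
    intro u hu
    rw [LinearMap.mem_ker]
    funext p
    exact hzero u hu p.1.1 p.1.2 p.2.1 p.2.2
  -- dimension count: d + card S ≤ n * n
  have h1 := LinearMap.finrank_range_add_finrank_ker φ
  have h2 : Module.finrank ℂ (LinearMap.range φ) = Fintype.card S := by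
    rw [LinearMap.range_eq_top.mpr hsurj, finrank_top,
      Module.finrank_fintype_fun_eq_card]
  have h3 : Module.finrank ℂ (Matrix (Fin n) (Fin n) ℂ) = n * n := by
    rw [Module.finrank_matrix]
    simp
  have h4 : d ≤ Module.finrank ℂ (LinearMap.ker φ) := hdim ▸ Submodule.finrank_mono hker
  have hcount : d + Fintype.card S ≤ n * n := by omega
  -- turn |·| < sqrt into squared inequality
  have hsq : ((k : ℝ) - (n + 1) / 2) ^ 2 <
      (d : ℝ) - 3 * n ^ 2 / 4 - n / 2 + 1 / 4 := by
    have h5 : |(k : ℝ) - (n + 1) / 2| ^ 2 <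
        Real.sqrt ((d : ℝ) - 3 * n ^ 2 / 4 - n / 2 + 1 / 4) ^ 2 := by
      exact pow_lt_pow_left₀ hk (abs_nonneg _) two_ne_zero
    rwa [sq_abs, Real.sq_sqrt hδ.le] at h5
  -- case analysis on k
  rcases le_or_gt k n with hkn | hkn
  · rcases Nat.eq_zero_or_pos k with hk0 | hk1
    · -- k = 0 : impossible numerically
      subst hk0
      have hd : (d : ℝ) ≤ (n : ℝ) * n := by
        have : (d : ℝ) ≤ ((n * n : ℕ) : ℝ) := by exact_mod_cast le_trans (Nat.le_add_right _ _) hcount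
        push_cast at this; linarith
      have hn0 : (0:ℝ) ≤ (n:ℝ) := Nat.cast_nonneg n
      push_cast at hsq
      nlinarith [hsq, hd, hn0]
    · -- 1 ≤ k ≤ n : the block has (n-k)(k-1) entries
      have hcard : (n - k) * (k - 1) ≤ Fintype.card S := by
        have := Fintype.card_le_of_injective
          (fun q : Fin (n - k) × Fin (k - 1) =>
            (⟨(⟨k + q.1, by omega⟩, ⟨q.2, by omega⟩),
              ⟨by simp, by simpa using (by omega : (q.2 : ℕ) + 1 < k)⟩⟩ : S))
          (by
            rintro ⟨a, b⟩ ⟨c, e⟩ h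
            have h' := congrArg Subtype.val h
            simp only [Prod.ext_iff, Fin.ext_iff] at h' ⊢
            omega)
        simpa using this
      have hcount' : d + (n - k) * (k - 1) ≤ n * n := le_trans (by omega) hcount
      have hreal : (d : ℝ) + ((n : ℝ) - k) * ((k : ℝ) - 1) ≤ (n : ℝ) * n := by
        have : ((d + (n - k) * (k - 1) : ℕ) : ℝ) ≤ ((n * n : ℕ) : ℝ) := by exact_mod_cast hcount'
        rw [Nat.cast_add, Nat.cast_mul, Nat.cast_sub hkn, Nat.cast_sub hk1] at this
        push_cast at this ⊢
        linarith
      nlinarith [hsq, hreal]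
  · -- k > n : impossible numerically
    have hd : (d : ℝ) ≤ (n : ℝ) * n := by
      have : (d : ℝ) ≤ ((n * n : ℕ) : ℝ) := by exact_mod_cast le_trans (Nat.le_add_right _ _) hcount
      push_cast at this; linarith
    have hkr : (n : ℝ) + 1 ≤ (k : ℝ) := by exact_mod_cast hkn
    have hn0 : (0:ℝ) ≤ (n:ℝ) := Nat.cast_nonneg n
    have h6 : (((n:ℝ) + 1) / 2) ^ 2 ≤ ((k:ℝ) - ((n:ℝ) + 1) / 2) ^ 2 := by nlinarith
    nlinarith [hsq, hd, h6, hn0]
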